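/- Let m ≥ 2, n ≥ 1, and for each α = 1, …, n let A^α be an m×m real symmetric matrix with trace zero, and let v^α ∈ ℝ^m. Then (Σ_α ‖v^α‖²)·(Σ_α ‖A^α‖_F²) ≥ (m/(m-1))·Σ_{i=1}^m (Σ_α (A^α v^α)_i)², where ‖·‖_F is the Frobenius norm. -/

import Mathlib

open Finset

lemma kato_key (m : ℕ) (hm : 2 ≤ m) (A : Matrix (Fin m) (Fin m) ℝ)
    (hs : ∀ i j, A i j = A j i) (ht : ∑ i, A i i = 0) (v : Fin m → ℝ) :
    (m : ℝ) * ∑ i, (∑ j, A i j * v j) ^ 2 ≤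
      ((m : ℝ) - 1) * (∑ i, (v i) ^ 2) * (∑ i, ∑ j, (A i j) ^ 2) := by
  set w : Fin m → ℝ := fun i => ∑ j, A i j * v j with hw
  set q : ℝ := ∑ i, (v i) ^ 2 with hqdef
  set t : ℝ := ∑ i, v i * w i with htdef
  set SA : ℝ := ∑ i, ∑ j, (A i j) ^ 2 with hSAdef
  set SW : ℝ := ∑ i, (w i) ^ 2 with hSWdef
  have hq : 0 ≤ q := Finset.sum_nonneg fun i _ => sq_nonneg _
  have hAv : ∀ j, ∑ i, A i j * v i = w j := by
    intro j
    rw [hw]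
    exact Finset.sum_congr rfl fun i _ => by rw [hs]
  -- atomic double sums
  have e1 : ∑ i, ∑ j, A i j * v i * w j = SW := by
    rw [Finset.sum_comm, hSWdef]
    refine Finset.sum_congr rfl fun j _ => ?_
    rw [← Finset.sum_mul, hAv, sq]
  have e2 : ∑ i, ∑ j, A i j * w i * v j = SW := by
    rw [hSWdef]
    refine Finset.sum_congr rfl fun i _ => ?_
    have h : ∑ j, A i j * w i * v j = (∑ j, A i j * v j) * w i := by
      rw [Finset.sum_mul]; exact Finset.sum_congr rfl fun j _ => by ring
    rw [h]; exact (sq (w i)).symm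
  have e3 : ∑ i, ∑ j, A i j * v i * v j = t := by
    rw [htdef]
    refine Finset.sum_congr rfl fun i _ => ?_
    rw [hw, Finset.mul_sum]
    exact Finset.sum_congr rfl fun j _ => by ring
  set B : Fin m → Fin m → ℝ :=
    fun i j => q ^ 2 * A i j - q * (v i * w j) - q * (w i * v j) + t * (v i * v j) with hB
  set SB : ℝ := ∑ i, ∑ j, (B i j) ^ 2 with hSBdef
  have hSBnn : 0 ≤ SB := Finset.sum_nonneg fun i _ => Finset.sum_nonneg fun j _ => sq_nonneg _
  -- the key Frobenius-norm identity
  have hSB : SB = q ^ 4 * SA - 2 * q ^ 3 * SW + q ^ 2 * t ^ 2 := by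
    have h1 : ∀ i j : Fin m, (B i j) ^ 2 =
        q ^ 4 * (A i j) ^ 2
        - 2 * q ^ 3 * (A i j * v i * w j)
        - 2 * q ^ 3 * (A i j * w i * v j)
        + 2 * q ^ 2 * t * (A i j * v i * v j)
        + q ^ 2 * ((v i) ^ 2 * (w j) ^ 2)
        + q ^ 2 * ((w i) ^ 2 * (v j) ^ 2)
        + t ^ 2 * ((v i) ^ 2 * (v j) ^ 2)
        + 2 * q ^ 2 * ((v i * w i) * (v j * w j))
        - 2 * q * t * ((v i) ^ 2 * (v j * w j))
        - 2 * q * t * ((v i * w i) * (v j) ^ 2) := by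
      intro i j; rw [hB]; ring
    calc SB = ∑ i, ∑ j, (q ^ 4 * (A i j) ^ 2
        - 2 * q ^ 3 * (A i j * v i * w j)
        - 2 * q ^ 3 * (A i j * w i * v j)
        + 2 * q ^ 2 * t * (A i j * v i * v j)
        + q ^ 2 * ((v i) ^ 2 * (w j) ^ 2)
        + q ^ 2 * ((w i) ^ 2 * (v j) ^ 2)
        + t ^ 2 * ((v i) ^ 2 * (v j) ^ 2)
        + 2 * q ^ 2 * ((v i * w i) * (v j * w j))
        - 2 * q * t * ((v i) ^ 2 * (v j * w j))
        - 2 * q * t * ((v i * w i) * (v j) ^ 2)) := by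
          rw [hSBdef]
          exact Finset.sum_congr rfl fun i _ => Finset.sum_congr rfl fun j _ => h1 i j
      _ = q ^ 4 * SA - 2 * q ^ 3 * SW + q ^ 2 * t ^ 2 := by
          simp only [Finset.sum_add_distrib, Finset.sum_sub_distrib, ← Finset.mul_sum,
            ← Finset.sum_mul, ← Finset.mul_sum]
          rw [e1, e2, e3, ← hSAdef, ← hqdef, ← hSWdef, ← htdef]
          ring
  -- B annihilates v
  have hBv : ∀ i, ∑ j, B i j * v j = 0 := by
    intro i
    have expand : ∀ j, B i j * v j =
        q ^ 2 * (A i j * v j) - (q * v i) * (v j * w j) - (q * w i) * (v j) ^ 2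
          + (t * v i) * (v j) ^ 2 := fun j => by rw [hB]; ring
    calc ∑ j, B i j * v j = ∑ j, (q ^ 2 * (A i j * v j) - (q * v i) * (v j * w j)
        - (q * w i) * (v j) ^ 2 + (t * v i) * (v j) ^ 2) :=
          Finset.sum_congr rfl fun j _ => expand j
      _ = 0 := by
          simp only [Finset.sum_add_distrib, Finset.sum_sub_distrib, ← Finset.mul_sum]
          rw [← hqdef, ← htdef, show (∑ j, A i j * v j) = w i from rfl]
          ring
  -- trace of B
  have htrB : ∑ i, B i i = -(q * t) := by
    have expand : ∀ i : Fin m, B i i = q ^ 2 * A i i - (2 * q) * (v i * w i)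
        + t * (v i) ^ 2 := fun i => by rw [hB]; ring
    calc ∑ i, B i i = ∑ i, (q ^ 2 * A i i - (2 * q) * (v i * w i) + t * (v i) ^ 2) :=
          Finset.sum_congr rfl fun i _ => expand i
      _ = -(q * t) := by
          simp only [Finset.sum_add_distrib, Finset.sum_sub_distrib, ← Finset.mul_sum]
          rw [← hqdef, ← htdef, ht]
          ring
  set P : Fin m → Fin m → ℝ := fun i j => (if i = j then q else 0) - v i * v j with hP
  have hPB : ∑ i, ∑ j, P i j * B i j = -(q ^ 2 * t) := by
    have expand : ∀ i j, P i j * B i j =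
        (if i = j then q * B i j else 0) - v i * (B i j * v j) := by
      intro i j
      by_cases h : i = j <;> simp [hP, h] <;> ring
    calc ∑ i, ∑ j, P i j * B i j
        = ∑ i, ∑ j, ((if i = j then q * B i j else 0) - v i * (B i j * v j)) :=
          Finset.sum_congr rfl fun i _ => Finset.sum_congr rfl fun j _ => expand i j
      _ = ∑ i, (q * B i i - v i * 0) := by
          refine Finset.sum_congr rfl fun i _ => ?_
          rw [Finset.sum_sub_distrib, Finset.sum_ite_eq, ← Finset.mul_sum, hBv i]
          simp
      _ = -(q ^ 2 * t) := by
          simp only [mul_zero, sub_zero, ← Finset.mul_sum]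
          rw [htrB]; ring
  have hPP : ∑ i, ∑ j, (P i j) ^ 2 = q ^ 2 * (m : ℝ) - q ^ 2 := by
    have expand : ∀ i j, (P i j) ^ 2 =
        (if i = j then q ^ 2 - 2 * q * (v i * v j) else 0) + (v i) ^ 2 * (v j) ^ 2 := by
      intro i j
      by_cases h : i = j <;> simp [hP, h] <;> ring
    calc ∑ i, ∑ j, (P i j) ^ 2
        = ∑ i, ∑ j, ((if i = j then q ^ 2 - 2 * q * (v i * v j) else 0)
            + (v i) ^ 2 * (v j) ^ 2) :=
          Finset.sum_congr rfl fun i _ => Finset.sum_congr rfl fun j _ => expand i j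
      _ = ∑ i, ((q ^ 2 - 2 * q * (v i * v i)) + (v i) ^ 2 * q) := by
          refine Finset.sum_congr rfl fun i _ => ?_
          rw [Finset.sum_add_distrib, Finset.sum_ite_eq, ← Finset.mul_sum, ← hqdef]
          simp
      _ = q ^ 2 * (m : ℝ) - q ^ 2 := by
          simp only [Finset.sum_add_distrib, Finset.sum_sub_distrib, ← Finset.mul_sum,
            ← Finset.sum_mul, Finset.sum_const, Finset.card_univ, Fintype.card_fin,
            nsmul_eq_mul]
          have h1 : ∑ i, v i * v i = q := by
            rw [hqdef]; exact Finset.sum_congr rfl fun i _ => (sq (v i)).symm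
          rw [h1, ← hqdef]
          ring
  -- Cauchy-Schwarz between P and B
  have hconv : ∀ f : Fin m → Fin m → ℝ,
      ∑ p : Fin m × Fin m, f p.1 p.2 = ∑ i, ∑ j, f i j := by
    intro f; rw [← Finset.univ_product_univ, Finset.sum_product]
  have hcs := Finset.sum_mul_sq_le_sq_mul_sq Finset.univ
      (fun p : Fin m × Fin m => P p.1 p.2) (fun p : Fin m × Fin m => B p.1 p.2)
  rw [hconv (fun i j => P i j * B i j), hconv (fun i j => (P i j) ^ 2),
    hconv (fun i j => (B i j) ^ 2), hPB, hPP, ← hSBdef, hSB] at hcs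
  have hts : t ^ 2 ≤ q * SW := by
    have h := Finset.sum_mul_sq_le_sq_mul_sq Finset.univ v w
    rw [← htdef, ← hqdef, ← hSWdef] at h
    exact h
  -- conclude
  rcases eq_or_lt_of_le hq with hq0 | hq0
  · have hv0 : ∀ i, v i = 0 := by
      intro i
      have h := (Finset.sum_eq_zero_iff_of_nonneg
        (fun i _ => sq_nonneg (v i))).1 hq0.symm i (Finset.mem_univ i)
      exact pow_eq_zero_iff two_ne_zero |>.1 h
    have hSW0 : SW = 0 := by
      rw [hSWdef]
      refine Finset.sum_eq_zero fun i _ => ?_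
      have hwi : w i = 0 := by
        rw [show w i = ∑ j, A i j * v j from rfl]
        exact Finset.sum_eq_zero fun j _ => by rw [hv0 j, mul_zero]
      rw [hwi]; ring
    have hgoal : (m : ℝ) * SW ≤ ((m : ℝ) - 1) * q * SA := by
      rw [hSW0, ← hq0]
      simp
    exact hgoal
  · have hm2 : (2 : ℝ) ≤ (m : ℝ) := by exact_mod_cast hm
    have h2 : 0 ≤ ((m : ℝ) - 2) * q ^ 4 * (q * SW - t ^ 2) :=
      mul_nonneg (mul_nonneg (by linarith) (by positivity)) (by linarith)
    have hq5 : 0 < q ^ 5 := pow_pos hq0 5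
    have hSWnn : 0 ≤ SW := Finset.sum_nonneg fun i _ => sq_nonneg _
    have hSAnn : 0 ≤ SA := Finset.sum_nonneg fun i _ => Finset.sum_nonneg fun j _ => sq_nonneg _
    nlinarith [hcs, h2, hq5, hSWnn, hSAnn]

theorem refined_kato_algebra (m n : ℕ) (hm : 2 ≤ m) (hn : 1 ≤ n)
    (A : Fin n → Matrix (Fin m) (Fin m) ℝ)
    (hsym : ∀ α, (A α).IsSymm) (htr : ∀ α, (A α).trace = 0)
    (v : Fin n → Fin m → ℝ) :
    ((m : ℝ) / ((m : ℝ) - 1)) * ∑ i, (∑ α, (A α).mulVec (v α) i) ^ 2 ≤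
      (∑ α, ∑ i, (v α i) ^ 2) * (∑ α, ∑ i, ∑ j, (A α i j) ^ 2) := by
  have hm2 : (2 : ℝ) ≤ (m : ℝ) := by exact_mod_cast hm
  have hm1 : (0 : ℝ) < (m : ℝ) - 1 := by linarith
  have hm0 : (0 : ℝ) < (m : ℝ) := by linarith
  have hkey : ∀ α, ∑ i, ((A α).mulVec (v α) i) ^ 2 ≤
      (((m : ℝ) - 1) / m) * ((∑ i, (v α i) ^ 2) * (∑ i, ∑ j, (A α i j) ^ 2)) := by
    intro α
    have hs : ∀ i j, A α i j = A α j i := fun i j => ((hsym α).apply i j).symm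
    have ht : ∑ i, A α i i = 0 := by
      have h := htr α
      simpa [Matrix.trace, Matrix.diag] using h
    have h := kato_key m hm (A α) hs ht (v α)
    have hmv : ∀ i, (A α).mulVec (v α) i = ∑ j, A α i j * v α j := by
      intro i; simp [Matrix.mulVec, dotProduct]
    simp only [hmv]
    rw [div_mul_eq_mul_div, le_div_iff₀ hm0]
    linear_combination h
  -- vectors in Euclidean space
  set f : Fin n → EuclideanSpace ℝ (Fin m) := fun α => WithLp.toLp 2 ((A α).mulVec (v α)) with hf
  have hnormf : ∀ α, ‖f α‖ = Real.sqrt (∑ i, ((A α).mulVec (v α) i) ^ 2) := by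
    intro α
    rw [EuclideanSpace.norm_eq]
    congr 1
    exact Finset.sum_congr rfl fun i _ => by rw [Real.norm_eq_abs, sq_abs, hf]
  have hL : ∑ i, (∑ α, (A α).mulVec (v α) i) ^ 2 = ‖∑ α, f α‖ ^ 2 := by
    rw [EuclideanSpace.norm_eq, Real.sq_sqrt (Finset.sum_nonneg fun i _ => by positivity)]
    refine Finset.sum_congr rfl fun i _ => ?_
    rw [Real.norm_eq_abs, sq_abs]
    congr 1
    rw [WithLp.ofLp_sum, Finset.sum_apply]
  set c : ℝ := ((m : ℝ) - 1) / m with hc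
  have hcnn : 0 ≤ c := by positivity
  have hbound : ∀ α, ‖f α‖ ≤
      Real.sqrt c * (Real.sqrt (∑ i, (v α i) ^ 2) * Real.sqrt (∑ i, ∑ j, (A α i j) ^ 2)) := by
    intro α
    rw [hnormf α]
    have h1 : ∑ i, ((A α).mulVec (v α) i) ^ 2 ≤
        c * ((∑ i, (v α i) ^ 2) * (∑ i, ∑ j, (A α i j) ^ 2)) := hkey α
    calc Real.sqrt (∑ i, ((A α).mulVec (v α) i) ^ 2)
        ≤ Real.sqrt (c * ((∑ i, (v α i) ^ 2) * (∑ i, ∑ j, (A α i j) ^ 2))) :=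
          Real.sqrt_le_sqrt h1
      _ = Real.sqrt c * (Real.sqrt (∑ i, (v α i) ^ 2) * Real.sqrt (∑ i, ∑ j, (A α i j) ^ 2)) := by
          rw [Real.sqrt_mul hcnn, Real.sqrt_mul (Finset.sum_nonneg fun i _ => sq_nonneg _)]
  have htri : ‖∑ α, f α‖ ≤ ∑ α, ‖f α‖ := norm_sum_le _ _
  have hsum : ∑ α, ‖f α‖ ≤
      Real.sqrt c * ∑ α, Real.sqrt (∑ i, (v α i) ^ 2) * Real.sqrt (∑ i, ∑ j, (A α i j) ^ 2) := by
    rw [Finset.mul_sum]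
    exact Finset.sum_le_sum fun α _ => hbound α
  set S : ℝ := ∑ α, Real.sqrt (∑ i, (v α i) ^ 2) * Real.sqrt (∑ i, ∑ j, (A α i j) ^ 2) with hS
  have hSnn : 0 ≤ S := Finset.sum_nonneg fun α _ => mul_nonneg (Real.sqrt_nonneg _) (Real.sqrt_nonneg _)
  have hS2 : S ^ 2 ≤ (∑ α, ∑ i, (v α i) ^ 2) * (∑ α, ∑ i, ∑ j, (A α i j) ^ 2) := by
    have h := Finset.sum_mul_sq_le_sq_mul_sq Finset.univ
      (fun α => Real.sqrt (∑ i, (v α i) ^ 2)) (fun α => Real.sqrt (∑ i, ∑ j, (A α i j) ^ 2))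
    rw [hS]
    calc (∑ α, Real.sqrt (∑ i, (v α i) ^ 2) * Real.sqrt (∑ i, ∑ j, (A α i j) ^ 2)) ^ 2
        ≤ (∑ α, Real.sqrt (∑ i, (v α i) ^ 2) ^ 2) * ∑ α, Real.sqrt (∑ i, ∑ j, (A α i j) ^ 2) ^ 2 := h
      _ = (∑ α, ∑ i, (v α i) ^ 2) * (∑ α, ∑ i, ∑ j, (A α i j) ^ 2) := by
          congr 1
          · exact Finset.sum_congr rfl fun α _ =>
              Real.sq_sqrt (Finset.sum_nonneg fun i _ => sq_nonneg _)
          · exact Finset.sum_congr rfl fun α _ =>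
              Real.sq_sqrt (Finset.sum_nonneg fun i _ => Finset.sum_nonneg fun j _ => sq_nonneg _)
  have hmain : ∑ i, (∑ α, (A α).mulVec (v α) i) ^ 2 ≤
      c * ((∑ α, ∑ i, (v α i) ^ 2) * (∑ α, ∑ i, ∑ j, (A α i j) ^ 2)) := by
    rw [hL]
    have h1 : ‖∑ α, f α‖ ≤ Real.sqrt c * S := le_trans htri hsum
    have h2 : ‖∑ α, f α‖ ^ 2 ≤ (Real.sqrt c * S) ^ 2 := by
      apply sq_le_sq' _ h1
      have : 0 ≤ ‖∑ α, f α‖ := norm_nonneg _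
      nlinarith [mul_nonneg (Real.sqrt_nonneg c) hSnn]
    calc ‖∑ α, f α‖ ^ 2 ≤ (Real.sqrt c * S) ^ 2 := h2
      _ = c * S ^ 2 := by rw [mul_pow, Real.sq_sqrt hcnn]
      _ ≤ c * ((∑ α, ∑ i, (v α i) ^ 2) * (∑ α, ∑ i, ∑ j, (A α i j) ^ 2)) :=
          mul_le_mul_of_nonneg_left hS2 hcnn
  calc ((m : ℝ) / ((m : ℝ) - 1)) * ∑ i, (∑ α, (A α).mulVec (v α) i) ^ 2
      ≤ ((m : ℝ) / ((m : ℝ) - 1)) *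
        (c * ((∑ α, ∑ i, (v α i) ^ 2) * (∑ α, ∑ i, ∑ j, (A α i j) ^ 2))) :=
        mul_le_mul_of_nonneg_left hmain (by positivity)
    _ = (∑ α, ∑ i, (v α i) ^ 2) * (∑ α, ∑ i, ∑ j, (A α i j) ^ 2) := by
        rw [hc]
        field_simp
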